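/- Let (γ_n) be positive with γ_n → 0 and ∑γ_n = ∞, K = ∏_{i=1}^d [a_i,b_i], h : K → ℝ^d bounded by H, (r_n) a sequence in ℝ^d with r_n → 0, and (e_n) with ∑ γ_n e_n convergent. Define x_{n+1} = Π_K(x_n + γ_n(h(x_n) + e_n + r_n)) with x_1 ∈ K, and set t_n = ∑_{k=1}^n γ_k, X_1(t) = x_k on [t_{k-1}, t_k), X_n(t) = X_1(t + t_{n-1}). Then (X_n) is equicontinuous in the extended sense: for every ε > 0 and T > 0 there is δ > 0 with limsup_n |X_n(t) - X_n(s)| < ε whenever |t-s| < δ, s,t ≤ T. -/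

import Mathlib

open Filter Finset

lemma sumIcoSub {M : Type*} [AddCommGroup M] (f : ℕ → M) {m j : ℕ} (h1 : 1 ≤ m) (hmj : m ≤ j) :
    ∑ k ∈ Finset.Ico m j, f k = ∑ k ∈ Finset.Icc 1 (j-1), f k - ∑ k ∈ Finset.Icc 1 (m-1), f k := by
  obtain ⟨m', rfl⟩ := Nat.exists_eq_add_of_le h1
  obtain ⟨j', rfl⟩ := Nat.exists_eq_add_of_le (le_trans h1 hmj)
  simp only [add_comm 1, Nat.add_sub_cancel]
  rw [eq_sub_iff_add_eq, add_comm, ← Finset.Ico_add_one_right_eq_Icc, ← Finset.Ico_add_one_right_eq_Icc]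
  exact Finset.sum_Ico_consecutive f (by omega) (by omega)

lemma clampWindow {α β : ℝ} (q s : ℕ → ℝ) (m p : ℕ) (hmp : m ≤ p)
    (hqm : α ≤ q m) (hqm' : q m ≤ β)
    (hrec : ∀ k, m ≤ k → k < p → q (k+1) = max α (min β (q k + s k)))
    (B : ℝ) (hB : ∀ j, m ≤ j → j ≤ p → |∑ k ∈ Finset.Ico m j, s k| ≤ B) :
    |q p - q m| ≤ 2 * B := by
  have hB0 : 0 ≤ B := by
    have := hB m le_rfl hmp; simp at this; linarith [abs_nonneg (∑ k ∈ Finset.Ico m m, s k)]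
  have key : ∀ j, m ≤ j → j ≤ p →
      q j - q m ≤ (∑ k ∈ Finset.Ico m j, s k) + B ∧
      q m - q j ≤ B - (∑ k ∈ Finset.Ico m j, s k) := by
    intro j hmj
    induction j, hmj using Nat.le_induction with
    | base => intro _; simp [hB0]
    | succ j hmj ih =>
      intro hjp
      have hjp' : j < p := by omega
      obtain ⟨ih1, ih2⟩ := ih (by omega)
      have hrj := hrec j hmj hjp'
      have hsum : ∑ k ∈ Finset.Ico m (j+1), s k = (∑ k ∈ Finset.Ico m j, s k) + s j :=
        Finset.sum_Ico_succ_top hmj s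
      have hBj1 := hB (j+1) (by omega) hjp'
      rw [abs_le] at hBj1
      constructor
      · have h1 : q (j+1) ≤ max α (q j + s j) :=
          hrj ▸ max_le_max le_rfl (min_le_right _ _)
        have h2 : max α (q j + s j) ≤ q m + ((∑ k ∈ Finset.Ico m (j+1), s k) + B) := by
          apply max_le
          · rw [hsum] at hBj1 ⊢; linarith
          · rw [hsum]; linarith
        linarith [le_trans h1 h2]
      · have h1 : min β (q j + s j) ≤ q (j+1) := hrj ▸ le_max_right _ _
        have h2 : q m + ((∑ k ∈ Finset.Ico m (j+1), s k) - B) ≤ min β (q j + s j) := by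
          apply le_min
          · rw [hsum] at hBj1 ⊢; linarith
          · rw [hsum]; linarith
        linarith [le_trans h2 h1]
  obtain ⟨k1, k2⟩ := key p hmp le_rfl
  have := hB p hmp le_rfl
  rw [abs_le] at this ⊢
  constructor <;> linarith

lemma coord_le_norm {d : ℕ} (w : EuclideanSpace ℝ (Fin d)) (i : Fin d) : |w i| ≤ ‖w‖ := by
  rw [EuclideanSpace.norm_eq, ← Real.sqrt_sq_eq_abs]
  apply Real.sqrt_le_sqrt
  exact Finset.single_le_sum (f := fun i => ‖w i‖^2) (fun j _ => by positivity) (Finset.mem_univ i)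
    |>.trans_eq' (by simp [sq_abs, Real.norm_eq_abs])

lemma norm_le_of_coords {d : ℕ} (w : EuclideanSpace ℝ (Fin d)) (c : ℝ) (hc : 0 ≤ c)
    (h : ∀ i, |w i| ≤ c) : ‖w‖ ≤ Real.sqrt d * c := by
  rw [EuclideanSpace.norm_eq]
  calc Real.sqrt (∑ i, ‖w i‖^2) ≤ Real.sqrt (∑ _i : Fin d, c^2) := by
        apply Real.sqrt_le_sqrt
        apply Finset.sum_le_sum
        intro i _
        rw [Real.norm_eq_abs]
        exact sq_le_sq' (by linarith [h i, abs_nonneg (w i)] ) (h i)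
    _ = Real.sqrt d * c := by
        rw [Finset.sum_const, Finset.card_univ, Fintype.card_fin, nsmul_eq_mul,
          Real.sqrt_mul (by positivity), Real.sqrt_sq hc]

lemma sum_coord {d : ℕ} (F : ℕ → EuclideanSpace ℝ (Fin d)) (S : Finset ℕ) (i : Fin d) :
    (∑ k ∈ S, F k) i = ∑ k ∈ S, F k i := by
  induction S using Finset.cons_induction with
  | empty => simp
  | cons a S ha ih => rw [Finset.sum_cons, Finset.sum_cons, ← ih]; rfl

lemma proj_eq_clamp {d : ℕ} (a b : Fin d → ℝ) (hab : ∀ i, a i < b i)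
    (K : Set (EuclideanSpace ℝ (Fin d)))
    (hK : K = {z : EuclideanSpace ℝ (Fin d) | ∀ i, z i ∈ Set.Icc (a i) (b i)})
    (proj : EuclideanSpace ℝ (Fin d) → EuclideanSpace ℝ (Fin d))
    (hproj : ∀ z, proj z ∈ K ∧ ∀ w ∈ K, ‖z - proj z‖ ≤ ‖z - w‖)
    (z : EuclideanSpace ℝ (Fin d)) (i : Fin d) :
    proj z i = max (a i) (min (b i) (z i)) := by
  set c : EuclideanSpace ℝ (Fin d) := WithLp.toLp 2 (fun j => max (a j) (min (b j) (z j)) : Fin d → ℝ) with hc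
  have hcK : c ∈ K := by
    rw [hK]
    intro j
    exact ⟨le_max_left _ _, max_le (hab j).le (min_le_left _ _)⟩
  have hnear : ∀ w ∈ K, ‖z - c‖ ≤ ‖z - w‖ := by
    intro w hw
    rw [hK] at hw
    rw [EuclideanSpace.norm_eq, EuclideanSpace.norm_eq]
    apply Real.sqrt_le_sqrt
    apply Finset.sum_le_sum
    intro j _
    have hwj := hw j
    have h1 : (z - c) j = z j - max (a j) (min (b j) (z j)) := rfl
    have h2 : (z - w) j = z j - w j := rfl
    rw [Real.norm_eq_abs, Real.norm_eq_abs, h1, h2, sq_abs, sq_abs]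
    rcases le_total (z j) (a j) with h | h
    · have : max (a j) (min (b j) (z j)) = a j := by
        rw [max_eq_left]; exact le_trans (min_le_right _ _) h
      rw [this]; nlinarith [hwj.1, hwj.2]
    · rcases le_total (z j) (b j) with h' | h'
      · have : max (a j) (min (b j) (z j)) = z j := by
          rw [min_eq_right h', max_eq_right h]
        rw [this]; nlinarith
      · have : max (a j) (min (b j) (z j)) = b j := by
          rw [min_eq_left h', max_eq_right (hab j).le]
        rw [this]; nlinarith [hwj.1, hwj.2]
  obtain ⟨huK, hu⟩ := hproj z
  set w : EuclideanSpace ℝ (Fin d) := (2⁻¹ : ℝ) • (proj z + c) with hw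
  have hwK : w ∈ K := by
    rw [hK]
    intro j
    have huj : proj z j ∈ Set.Icc (a j) (b j) := by rw [hK] at huK; exact huK j
    have hcj : c j ∈ Set.Icc (a j) (b j) := by rw [hK] at hcK; exact hcK j
    have : w j = 2⁻¹ * (proj z j + c j) := rfl
    rw [this]
    constructor
    · nlinarith [huj.1, hcj.1]
    · nlinarith [huj.2, hcj.2]
  have e1 : ‖z - proj z‖ ≤ ‖z - c‖ := (hproj z).2 c hcK
  have e2 : ‖z - c‖ ≤ ‖z - proj z‖ := hnear _ huK
  have e3 : ‖z - proj z‖ ≤ ‖z - w‖ := (hproj z).2 w hwK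
  have heq : ‖z - c‖ = ‖z - proj z‖ := le_antisymm e2 e1
  have hpar := parallelogram_law_with_norm ℝ (z - proj z) (z - c)
  have hmid : z - w = (2⁻¹ : ℝ) • ((z - proj z) + (z - c)) := by
    rw [hw]; module
  have h2M : ‖(z - proj z) + (z - c)‖ = 2 * ‖z - w‖ := by
    rw [hmid, norm_smul]
    simp [norm_inv]
  have hdiff : (z - proj z) - (z - c) = c - proj z := by module
  have hzero : ‖c - proj z‖^2 ≤ 0 := by
    rw [← hdiff]
    nlinarith [norm_nonneg (z - w), norm_nonneg (z - proj z)]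
  have hcp : c = proj z := by
    have h00 := norm_nonneg (c - proj z)
    have h0 : ‖c - proj z‖ = 0 := by nlinarith
    rw [norm_sub_eq_zero_iff] at h0
    exact h0
  rw [← hcp]

/-- Equicontinuity in the extended sense of the shifted interpolations of the
projected stochastic approximation iterates (deterministic version). -/
theorem stmt6 (d : ℕ) (γ : ℕ → ℝ)
    (e r : ℕ → EuclideanSpace ℝ (Fin d))
    (a b : Fin d → ℝ) (hab : ∀ i, a i < b i)
    (K : Set (EuclideanSpace ℝ (Fin d)))
    (hK : K = {z : EuclideanSpace ℝ (Fin d) | ∀ i, z i ∈ Set.Icc (a i) (b i)})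
    (hfun : EuclideanSpace ℝ (Fin d) → EuclideanSpace ℝ (Fin d))
    (H : ℝ) (hH : ∀ z ∈ K, ‖hfun z‖ ≤ H)
    (hγpos : ∀ n, 0 < γ n) (hγ0 : Tendsto γ atTop (nhds 0))
    (hγdiv : Tendsto (fun n => ∑ k ∈ Finset.Icc 1 n, γ k) atTop atTop)
    (hr : Tendsto r atTop (nhds 0))
    (he : ∃ L, Tendsto (fun n => ∑ k ∈ Finset.Icc 1 n, γ k • e k) atTop (nhds L))
    (proj : EuclideanSpace ℝ (Fin d) → EuclideanSpace ℝ (Fin d))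
    (hproj : ∀ z, proj z ∈ K ∧ ∀ w ∈ K, ‖z - proj z‖ ≤ ‖z - w‖)
    (x : ℕ → EuclideanSpace ℝ (Fin d)) (hx1 : x 1 ∈ K)
    (hrec : ∀ n, 1 ≤ n → x (n + 1) = proj (x n + γ n • (hfun (x n) + e n + r n)))
    (t : ℕ → ℝ) (ht : ∀ n, t n = ∑ k ∈ Finset.Icc 1 n, γ k)
    (X : ℕ → ℝ → EuclideanSpace ℝ (Fin d))
    (hX1 : ∀ k, 1 ≤ k → ∀ s : ℝ, t (k - 1) ≤ s → s < t k → X 1 s = x k)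
    (hXn : ∀ n, 1 ≤ n → ∀ s : ℝ, X n s = X 1 (s + t (n - 1))) :
    ∀ ε > (0:ℝ), ∀ T > (0:ℝ), ∃ δ > (0:ℝ), ∀ s v : ℝ, 0 ≤ s → 0 ≤ v →
      s ≤ T → v ≤ T → |v - s| < δ →
      Filter.limsup (fun n => ‖X n v - X n s‖) atTop < ε := by
  classical
  intro ε hε T hT
  -- basic facts
  have hH0 : 0 ≤ H := le_trans (norm_nonneg _) (hH _ hx1)
  have hxK : ∀ k, 1 ≤ k → x k ∈ K := by
    intro k hk
    induction k, hk using Nat.le_induction with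
    | base => exact hx1
    | succ k hk ih => rw [hrec k hk]; exact (hproj _).1
  have tmono : Monotone t := by
    intro i j hij
    rw [ht, ht]
    exact Finset.sum_le_sum_of_subset_of_nonneg (Finset.Icc_subset_Icc_right hij)
      (fun k _ _ => (hγpos k).le)
  have trec : ∀ k, 1 ≤ k → t k = t (k-1) + γ k := by
    intro k hk
    obtain ⟨k', rfl⟩ := Nat.exists_eq_add_of_le hk
    rw [add_comm 1 k', ht, ht, Nat.add_sub_cancel, Finset.sum_Icc_succ_top (by omega)]
  have htt : Tendsto t atTop atTop := by
    have hfe : t = fun n => ∑ k ∈ Finset.Icc 1 n, γ k := funext ht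
    rw [hfe]; exact hγdiv
  have ht0 : ∀ k, 0 ≤ t k := by
    intro k; rw [ht]; exact Finset.sum_nonneg (fun j _ => (hγpos j).le)
  have idx : ∀ u : ℝ, 0 ≤ u → ∃ k, 1 ≤ k ∧ t (k-1) ≤ u ∧ u < t k := by
    intro u hu
    have hex : ∃ n, u < t n := (htt.eventually_gt_atTop u).exists
    have hfind := Nat.find_spec hex
    have ht00 : t 0 = 0 := by rw [ht]; simp
    have hk1 : 1 ≤ Nat.find hex := by
      rcases Nat.eq_zero_or_pos (Nat.find hex) with h | h
      · rw [h, ht00] at hfind; linarith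
      · exact h
    have hk2 : t (Nat.find hex - 1) ≤ u := by
      by_contra hcon
      push_neg at hcon
      exact Nat.find_min hex (by omega) hcon
    exact ⟨_, hk1, hk2, hfind⟩
  -- choose constants
  set R := Real.sqrt d with hR
  have hR0 : 0 ≤ R := Real.sqrt_nonneg _
  set sd := R + 1 with hsddef
  have hsd1 : 1 ≤ sd := by linarith
  set δ : ℝ := min 1 (ε / (16 * sd * (H + 2))) with hδdef
  have hδpos : 0 < δ := lt_min one_pos (by positivity)
  set εC := ε / (16 * sd) with hεCdef
  have hεCpos : 0 < εC := by positivity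
  -- Cauchy property
  obtain ⟨L, hL⟩ := he
  have hcauchy : ∃ N₃ : ℕ, ∀ i, N₃ ≤ i → ∀ j, N₃ ≤ j →
      ‖(∑ k ∈ Finset.Icc 1 j, γ k • e k) - ∑ k ∈ Finset.Icc 1 i, γ k • e k‖ ≤ εC := by
    have hcs := hL.cauchySeq
    rw [Metric.cauchySeq_iff] at hcs
    obtain ⟨N₃, hN₃⟩ := hcs εC hεCpos
    exact ⟨N₃, fun i hi j hj => by
      have := hN₃ j hj i hi
      rw [dist_eq_norm] at this
      exact this.le⟩
  obtain ⟨N₃, hN₃⟩ := hcauchy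
  have hr1 : ∃ N₁ : ℕ, ∀ k, N₁ ≤ k → ‖r k‖ ≤ 1 := by
    have := (NormedAddCommGroup.tendsto_nhds_zero.mp hr) 1 one_pos
    rw [eventually_atTop] at this
    obtain ⟨N₁, hN₁⟩ := this
    exact ⟨N₁, fun k hk => (hN₁ k hk).le⟩
  obtain ⟨N₁, hN₁⟩ := hr1
  have hγδ : ∃ N₂ : ℕ, ∀ k, N₂ ≤ k → γ k ≤ δ := by
    have := (Metric.tendsto_atTop.mp hγ0) δ hδpos
    obtain ⟨N₂, hN₂⟩ := this
    refine ⟨N₂, fun k hk => ?_⟩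
    have := hN₂ k hk
    rw [Real.dist_eq, sub_zero] at this
    exact (le_abs_self _).trans this.le
  obtain ⟨N₂, hN₂⟩ := hγδ
  set N := max (max N₁ N₂) N₃ + 1 with hNdef
  have hN1 : 1 ≤ N := by omega
  refine ⟨δ, hδpos, ?_⟩
  intro s v hs hv hsT hvT hsv
  set B := 2*δ*(H+1) + εC with hBdef
  have hBpos : 0 < B := by positivity
  -- main estimate for ordered times
  have main : ∀ s v : ℝ, 0 ≤ s → s ≤ v → v - s < δ → ∀ n, N ≤ n →
      ‖X n v - X n s‖ ≤ ε/2 := by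
    intro s v hs hsv hd n hn
    have hn1 : 1 ≤ n := le_trans hN1 hn
    set τ := t (n-1) with hτ
    have hτ0 : 0 ≤ τ := ht0 _
    obtain ⟨m, hm1, hm2, hm3⟩ := idx (s+τ) (by linarith)
    obtain ⟨p, hp1, hp2, hp3⟩ := idx (v+τ) (by linarith)
    have hXs : X n s = x m := by rw [hXn n hn1 s]; exact hX1 m hm1 _ hm2 hm3
    have hXv : X n v = x p := by rw [hXn n hn1 v]; exact hX1 p hp1 _ hp2 hp3
    have hmp : m ≤ p := by
      by_contra h
      push_neg at h
      have : t p ≤ t (m-1) := tmono (by omega)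
      linarith
    have hmN : N ≤ m := by
      by_contra h
      push_neg at h
      have : t m ≤ t (n-1) := tmono (by omega)
      linarith
    have hwin : ∀ j, m ≤ j → j ≤ p → ∑ k ∈ Finset.Ico m j, γ k ≤ 2*δ := by
      intro j hj hjp
      have h1 : ∑ k ∈ Finset.Ico m j, γ k = t (j-1) - t (m-1) := by
        rw [sumIcoSub γ hm1 hj, ← ht, ← ht]
      have h2 : t (j-1) ≤ t (p-1) := tmono (by omega)
      have h3 : t m = t (m-1) + γ m := trec m hm1
      have h4 : γ m ≤ δ := hN₂ m (by omega)
      linarith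
    have hewin : ∀ j, m ≤ j → j ≤ p → ‖∑ k ∈ Finset.Ico m j, γ k • e k‖ ≤ εC := by
      intro j hj hjp
      rw [sumIcoSub (fun k => γ k • e k) hm1 hj]
      exact hN₃ (m-1) (by omega) (j-1) (by omega)
    have hcoord : ∀ i, |x p i - x m i| ≤ 2*B := by
      intro i
      have hxmK : x m ∈ K := hxK m (by omega)
      have hxm : ∀ i, x m i ∈ Set.Icc (a i) (b i) := by rw [hK] at hxmK; exact hxmK
      apply clampWindow (α := a i) (β := b i) (fun k => x k i)
        (fun k => γ k * ((hfun (x k)) i + e k i + r k i)) m p hmp (hxm i).1 (hxm i).2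
      · intro k hk hkp
        have hk1 : 1 ≤ k := by omega
        have hz : x (k+1) = proj (x k + γ k • (hfun (x k) + e k + r k)) := hrec k hk1
        show x (k+1) i = _
        rw [hz, proj_eq_clamp a b hab K hK proj hproj]
        rfl
      · intro j hj hjp
        have hsplit : ∑ k ∈ Finset.Ico m j, γ k * ((hfun (x k)) i + e k i + r k i)
            = (∑ k ∈ Finset.Ico m j, γ k * ((hfun (x k)) i + r k i))
              + ∑ k ∈ Finset.Ico m j, γ k * e k i := by
          rw [← Finset.sum_add_distrib]
          apply Finset.sum_congr rfl
          intro k _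
          ring
        rw [hsplit]
        have h1 : |∑ k ∈ Finset.Ico m j, γ k * ((hfun (x k)) i + r k i)|
            ≤ (H+1) * ∑ k ∈ Finset.Ico m j, γ k := by
          calc |∑ k ∈ Finset.Ico m j, γ k * ((hfun (x k)) i + r k i)|
              ≤ ∑ k ∈ Finset.Ico m j, |γ k * ((hfun (x k)) i + r k i)| :=
                Finset.abs_sum_le_sum_abs _ _
            _ ≤ ∑ k ∈ Finset.Ico m j, (H+1) * γ k := by
                apply Finset.sum_le_sum
                intro k hk
                rw [Finset.mem_Ico] at hk
                have hk1 : 1 ≤ k := by omega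
                have hxkK : x k ∈ K := hxK k hk1
                have hh : |(hfun (x k)) i| ≤ H :=
                  le_trans (coord_le_norm _ i) (hH _ hxkK)
                have hrk : |r k i| ≤ 1 :=
                  le_trans (coord_le_norm _ i) (hN₁ k (by omega))
                rw [abs_mul, abs_of_pos (hγpos k)]
                rw [mul_comm]
                apply mul_le_mul_of_nonneg_right _ (hγpos k).le
                calc |(hfun (x k)) i + r k i| ≤ |(hfun (x k)) i| + |r k i| := abs_add_le _ _
                  _ ≤ H + 1 := by linarith
            _ = (H+1) * ∑ k ∈ Finset.Ico m j, γ k := by rw [Finset.mul_sum]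
        have h2 : |∑ k ∈ Finset.Ico m j, γ k * e k i| ≤ εC := by
          have hcc : ∑ k ∈ Finset.Ico m j, γ k * e k i
              = (∑ k ∈ Finset.Ico m j, γ k • e k) i := by
            rw [sum_coord]
            exact Finset.sum_congr rfl (fun k _ => rfl)
          rw [hcc]
          exact le_trans (coord_le_norm _ i) (hewin j hj hjp)
        have h3 := hwin j hj hjp
        calc |(∑ k ∈ Finset.Ico m j, γ k * ((hfun (x k)) i + r k i))
              + ∑ k ∈ Finset.Ico m j, γ k * e k i|
            ≤ |∑ k ∈ Finset.Ico m j, γ k * ((hfun (x k)) i + r k i)|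
              + |∑ k ∈ Finset.Ico m j, γ k * e k i| := abs_add_le _ _
          _ ≤ (H+1) * (2*δ) + εC := by
              have : (H+1) * ∑ k ∈ Finset.Ico m j, γ k ≤ (H+1) * (2*δ) :=
                mul_le_mul_of_nonneg_left h3 (by linarith)
              linarith
          _ = B := by rw [hBdef]; ring
    rw [hXs, hXv]
    have hnormle : ‖x p - x m‖ ≤ R * (2*B) := by
      apply norm_le_of_coords _ _ (by positivity)
      intro i
      have : (x p - x m) i = x p i - x m i := rfl
      rw [this]
      exact hcoord i
    refine le_trans hnormle ?_
    -- arithmetic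
    have hδ2 : δ ≤ ε / (16 * sd * (H + 2)) := min_le_right _ _
    have hA : δ * (16 * sd * (H + 2)) ≤ ε := by
      rw [← le_div_iff₀ (by positivity)]
      exact hδ2
    have hBexp : εC * (16 * sd) = ε := by
      rw [hεCdef]
      field_simp
    nlinarith [mul_nonneg hδpos.le hH0, mul_nonneg (mul_nonneg hδpos.le hH0) hR0,
      mul_nonneg hδpos.le hR0, mul_nonneg hεCpos.le hR0, hεCpos.le, hδpos.le]
  -- conclude
  have hev : ∀ᶠ n in atTop, ‖X n v - X n s‖ ≤ ε/2 := by
    rw [eventually_atTop]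
    refine ⟨N, fun n hn => ?_⟩
    rcases le_total s v with h | h
    · exact main s v hs h (lt_of_le_of_lt (le_abs_self _) hsv) n hn
    · rw [norm_sub_rev]
      have : |s - v| < δ := by rw [abs_sub_comm]; exact hsv
      exact main v s hv h (lt_of_le_of_lt (le_abs_self _) this) n hn
  have hlb : IsBoundedUnder (· ≥ ·) atTop (fun n => ‖X n v - X n s‖) :=
    isBoundedUnder_of_eventually_ge (a := 0)
      (Eventually.of_forall (fun n => norm_nonneg _))
  have hcob : IsCoboundedUnder (· ≤ ·) atTop (fun n => ‖X n v - X n s‖) :=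
    hlb.isCoboundedUnder_flip
  calc Filter.limsup (fun n => ‖X n v - X n s‖) atTop ≤ ε/2 :=
        Filter.limsup_le_of_le hcob hev
    _ < ε := by linarith
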